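/- Define the Riordan triangle numbers by R(0,0) = 1, R(n,k) = 0 whenever k < 0 or k > n, and for n ≥ 1: R(n,0) = R(n−1, 1) and R(n,k) = R(n−1, k−1) + R(n−1, k) + R(n−1, k+1) for 1 ≤ k ≤ n. Then for every natural number n, R(2n, 0) = ∑_{k=0}^{n} R(n,k)². -/
import Mathlib


/-- For any family `R : ℕ → ℤ → ℕ` satisfying the defining recurrence of the Riordan triangle
numbers (`R(0,0) = 1`, `R(n,k) = 0` for `k < 0` or `k > n`, `R(n,0) = R(n−1,1)` for `n ≥ 1`,
and `R(n,k) = R(n−1,k−1) + R(n−1,k) + R(n−1,k+1)` for `n ≥ 1` and `1 ≤ k ≤ n`), we have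
`R(2n, 0) = ∑_{k=0}^{n} R(n,k)²`. -/
theorem stmt15 (R : ℕ → ℤ → ℕ)
    (h0 : R 0 0 = 1)
    (hout : ∀ (n : ℕ) (k : ℤ), k < 0 ∨ (n : ℤ) < k → R n k = 0)
    (hzero : ∀ n : ℕ, R (n + 1) 0 = R n 1)
    (hrec : ∀ (n : ℕ) (k : ℤ), 1 ≤ k → k ≤ (n : ℤ) + 1 →
      R (n + 1) k = R n (k - 1) + R n k + R n (k + 1)) :
    ∀ n : ℕ, R (2 * n) 0 = ∑ k ∈ Finset.range (n + 1), (R n k) ^ 2 := by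
  -- The recurrence holds for all k ≥ 1, since all terms vanish when k > n+1.
  have hrec' : ∀ (a : ℕ) (k : ℤ), 1 ≤ k →
      R (a + 1) k = R a (k - 1) + R a k + R a (k + 1) := by
    intro a k hk
    by_cases h : k ≤ (a : ℤ) + 1
    · exact hrec a k hk h
    · push_neg at h
      rw [hout (a+1) k (Or.inr (by push_cast; linarith)),
          hout a (k-1) (Or.inr (by linarith)),
          hout a k (Or.inr (by linarith)),
          hout a (k+1) (Or.inr (by linarith))]
  -- Telescoping identity.
  have aux : ∀ (a b N : ℕ),
      (∑ k ∈ Finset.range N, (R (a+1) k * R b k : ℤ)) =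
      (∑ k ∈ Finset.range N, (R a k * R (b+1) k : ℤ))
        + ((R a N : ℤ) * R b ((N:ℤ) - 1) - (R a ((N:ℤ)-1) : ℤ) * R b N) := by
    intro a b N
    induction N with
    | zero =>
        simp [hout a (-1) (Or.inl (by norm_num)), hout b (-1) (Or.inl (by norm_num))]
    | succ N ih =>
      rw [Finset.sum_range_succ, Finset.sum_range_succ, ih]
      rcases Nat.eq_zero_or_pos N with h | h
      · subst h
        simp only [Nat.cast_zero, Nat.cast_one, zero_sub]
        rw [hout a (-1) (Or.inl (by norm_num)), hout b (-1) (Or.inl (by norm_num)),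
            hzero a, hzero b]
        push_cast
        ring_nf
      · have h1 : (1:ℤ) ≤ (N:ℤ) := by exact_mod_cast h
        rw [hrec' a N h1, hrec' b N h1]
        push_cast
        simp only [add_sub_cancel_right]
        ring
  intro n
  set L := 2 * n + 2 with hL
  -- invariant: the inner product of rows n+j and n-j is constant in j.
  have inv : ∀ j, j ≤ n →
      (∑ k ∈ Finset.range L, (R (n+j) k * R (n-j) k : ℤ)) =
      ∑ k ∈ Finset.range L, (R n k * R n k : ℤ) := by
    intro j
    induction j with
    | zero => simp
    | succ j ih =>
      intro hj
      have hj' : j ≤ n := le_of_lt (Nat.lt_of_succ_le hj)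
      have key := aux (n + j) (n - (j + 1)) L
      have hsub : n - (j + 1) + 1 = n - j := by omega
      have hLa : (n + j : ℤ) < (L : ℤ) := by push_cast [hL]; omega
      have hLb : ((n - (j+1) : ℕ) : ℤ) < (L : ℤ) := by
        push_cast [hL]
        omega
      rw [hsub, hout (n + j) L (Or.inr hLa), hout (n - (j+1)) L (Or.inr hLb)] at key
      have : n + (j + 1) = (n + j) + 1 := by omega
      rw [this]
      rw [key]
      simpa using ih hj'
  have main := inv n le_rfl
  have h2n : n + n = 2 * n := by omega
  have hnn : n - n = 0 := by omega
  rw [h2n, hnn] at main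
  -- the left side reduces to R(2n,0)
  have hleft : (∑ k ∈ Finset.range L, (R (2*n) k * R 0 k : ℤ)) = (R (2*n) 0 : ℤ) := by
    rw [Finset.sum_eq_single 0]
    · simp [h0]
    · intro k _ hk
      have : (0:ℤ) < (k : ℤ) := by exact_mod_cast Nat.pos_of_ne_zero hk
      rw [hout 0 k (Or.inr (by exact_mod_cast this))]
      simp
    · intro h
      exact absurd (Finset.mem_range.mpr (by omega)) h
  rw [hleft] at main
  -- the right side truncates to range (n+1)
  have hright : (∑ k ∈ Finset.range L, (R n k * R n k : ℤ)) =
      ∑ k ∈ Finset.range (n+1), (R n k * R n k : ℤ) := by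
    symm
    apply Finset.sum_subset
    · apply Finset.range_subset_range.mpr; omega
    · intro k _ hk
      have : (n : ℤ) < (k : ℤ) := by
        have := Finset.mem_range.not.mp hk
        push_neg at this
        exact_mod_cast Nat.lt_of_succ_le (by omega)
      rw [hout n k (Or.inr this)]
      simp
  rw [hright] at main
  have : ((R (2*n) 0 : ℤ)) = ((∑ k ∈ Finset.range (n+1), (R n k)^2 : ℕ) : ℤ) := by
    rw [main]
    push_cast
    apply Finset.sum_congr rfl
    intro k _
    ring
  exact_mod_cast this
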